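/- For all integers m, n ≥ 2, there exist a complete DFA M with m states and a complete DFA N with n states over a common alphabet such that every complete DFA accepting L(M)^R · L(N) has at least (3/4)·2^(m+n) states. -/

import Mathlib

open Computability
open Fin.CommRing

/-- The reversal of a language. -/
def revLang {α : Type} (L : Language α) : Language α := {w | w.reverse ∈ L}

namespace RevCat

open Finset

variable (a b : ℕ)

def fM : Fin (a+2) := ⟨a+1, by omega⟩
def fN : Fin (b+2) := ⟨b+1, by omega⟩

def pM : Fin (a+2) := ⟨a, by omega⟩

def mstep : Fin (a+2) → Fin 4 → Fin (a+2) := fun q x =>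
  if x = 0 then q + 1
  else if x = 1 then (if q = fM a then pM a else q)
  else if x = 2 then (if q = pM a then fM a else if q = fM a then pM a else q)
  else q

def nstep : Fin (b+2) → Fin 4 → Fin (b+2) := fun q x =>
  if x = 2 then 0 else if x = 3 then q + 1 else q

def M : DFA (Fin 4) (Fin (a+2)) := ⟨fun q x => mstep a q x, 0, {fM a}⟩
def N : DFA (Fin 4) (Fin (b+2)) := ⟨fun q x => nstep b q x, 0, {fN b}⟩

abbrev P := Finset (Fin (a+2)) × Finset (Fin (b+2))

def stepS (x : Fin 4) (S : Finset (Fin (a+2))) : Finset (Fin (a+2)) :=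
  univ.filter (fun q => mstep a q x ∈ S)

def stepP (p : P a b) (x : Fin 4) : P a b :=
  (stepS a x p.1,
   p.2.image (fun t => nstep b t x) ∪ (if (0 : Fin (a+2)) ∈ stepS a x p.1 then {0} else ∅))

def evalP (p : P a b) (w : List (Fin 4)) : P a b := w.foldl (stepP a b) p

def initP : P a b := ({fM a}, ∅)

lemma evalP_append (p : P a b) (w z : List (Fin 4)) :
    evalP a b p (w ++ z) = evalP a b (evalP a b p w) z :=
  List.foldl_append

def Spart (w : List (Fin 4)) : Finset (Fin (a+2)) :=
  univ.filter (fun q => (M a).evalFrom q w.reverse = fM a)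

open scoped Classical in
noncomputable def Tpart (w : List (Fin 4)) : Finset (Fin (b+2)) :=
  univ.filter (fun t => ∃ u v, u ++ v = w ∧ (0 : Fin (a+2)) ∈ Spart a u ∧ (N b).evalFrom 0 v = t)

lemma mem_Spart {w : List (Fin 4)} {q : Fin (a+2)} :
    q ∈ Spart a w ↔ (M a).evalFrom q w.reverse = fM a := by
  simp [Spart]

lemma mem_Tpart {w : List (Fin 4)} {t : Fin (b+2)} :
    t ∈ Tpart a b w ↔
      ∃ u v, u ++ v = w ∧ (0 : Fin (a+2)) ∈ Spart a u ∧ (N b).evalFrom 0 v = t := by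
  simp [Tpart]

lemma Spart_nil : Spart a [] = {fM a} := by
  ext q; simp [mem_Spart, DFA.evalFrom]

lemma zero_ne_fM : (0 : Fin (a+2)) ≠ fM a := by
  simp [Fin.ext_iff, fN, fM]

lemma Tpart_nil : Tpart a b [] = ∅ := by
  ext t
  simp only [mem_Tpart, Finset.notMem_empty, iff_false]
  rintro ⟨u, v, huv, hu, -⟩
  rcases List.append_eq_nil_iff.mp huv with ⟨rfl, rfl⟩
  rw [Spart_nil] at hu
  exact zero_ne_fM a (by simpa using hu)

lemma Spart_concat (w : List (Fin 4)) (x : Fin 4) :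
    Spart a (w ++ [x]) = stepS a x (Spart a w) := by
  ext q
  simp only [mem_Spart, stepS, Finset.mem_filter, Finset.mem_univ, true_and]
  rw [List.reverse_append]
  rfl

lemma concat_split {u v w : List (Fin 4)} {x : Fin 4} (h : u ++ v = w ++ [x]) :
    (u = w ++ [x] ∧ v = []) ∨ ∃ v', v = v' ++ [x] ∧ u ++ v' = w := by
  rcases List.eq_nil_or_concat v with rfl | ⟨v', y, rfl⟩
  · left; constructor <;> simp_all
  · right
    rw [List.concat_eq_append, ← List.append_assoc] at h
    have h2 := List.append_inj' h rfl
    exact ⟨v', by simp [h2.2], h2.1⟩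

lemma Tpart_concat (w : List (Fin 4)) (x : Fin 4) :
    Tpart a b (w ++ [x]) = (stepP a b (Spart a w, Tpart a b w) x).2 := by
  ext t
  simp only [mem_Tpart, stepP, Finset.mem_union, Finset.mem_image]
  constructor
  · rintro ⟨u, v, huv, hu, hv⟩
    rcases concat_split huv with ⟨rfl, rfl⟩ | ⟨v', rfl, rfl⟩
    · right
      rw [Spart_concat] at hu
      simp only [hu, if_true, Finset.mem_singleton]
      simpa [DFA.evalFrom] using hv.symm
    · left
      refine ⟨(N b).evalFrom 0 v', ?_, ?_⟩
      · exact ⟨u, v', rfl, hu, rfl⟩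
      · rw [← hv]
        simp [DFA.evalFrom, N]
  · rintro (⟨s, hs, hst⟩ | h)
    · rcases hs with ⟨u, v, huv, hu, hv⟩
      refine ⟨u, v ++ [x], by rw [← List.append_assoc, huv], hu, ?_⟩
      rw [← hst, ← hv]
      simp [DFA.evalFrom, N]
    · by_cases h0 : (0 : Fin (a+2)) ∈ stepS a x (Spart a w)
      · simp only [h0, if_true, Finset.mem_singleton] at h
        refine ⟨w ++ [x], [], by simp, ?_, by simp [DFA.evalFrom, h]⟩
        rw [Spart_concat]; exact h0
      · simp [h0] at h

end RevCat

namespace RevCat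
open Finset
variable (a b : ℕ)

lemma evalP_spec (w : List (Fin 4)) :
    evalP a b (initP a b) w = (Spart a w, Tpart a b w) := by
  induction w using List.reverseRecOn with
  | nil => simp [evalP, initP, Spart_nil, Tpart_nil]
  | append_singleton w x ih =>
    rw [evalP_append, ih]
    have h1 := Spart_concat a w x
    have h2 := Tpart_concat a b w x
    show stepP a b _ x = _
    rw [h2, h1]
    rfl

lemma accept_iff (w : List (Fin 4)) :
    w ∈ revLang (M a).accepts * (N b).accepts ↔ fN b ∈ Tpart a b w := by
  rw [Language.mem_mul, mem_Tpart]
  constructor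
  · rintro ⟨u, hu, v, hv, rfl⟩
    refine ⟨u, v, rfl, ?_, ?_⟩
    · rw [mem_Spart]
      have : (M a).evalFrom (M a).start u.reverse ∈ (M a).accept := (DFA.mem_accepts _).mp hu
      simpa [M] using this
    · have : (N b).evalFrom (N b).start v ∈ (N b).accept := (DFA.mem_accepts _).mp hv
      simpa [N] using this
  · rintro ⟨u, v, rfl, hu, hv⟩
    refine ⟨u, ?_, v, ?_, rfl⟩
    · show u.reverse ∈ (M a).accepts
      rw [DFA.mem_accepts]
      rw [mem_Spart] at hu
      simpa [M, DFA.eval] using hu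
    · rw [DFA.mem_accepts]
      simpa [N, DFA.eval] using hv

end RevCat

namespace RevCat
open Finset
open scoped Classical
variable (a b : ℕ)

lemma pM_ne_fM : pM a ≠ fM a := by simp [Fin.ext_iff, pM, fM]

lemma mstep_a (q : Fin (a+2)) : mstep a q 0 = q + 1 := by simp [mstep]
lemma mstep_b (q : Fin (a+2)) : mstep a q 1 = if q = fM a then pM a else q := by
  simp only [mstep]
  rw [if_neg (by decide : ¬(1:Fin 4) = 0)]
  simp
lemma mstep_c (q : Fin (a+2)) :
    mstep a q 2 = if q = pM a then fM a else if q = fM a then pM a else q := by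
  simp only [mstep]
  rw [if_neg (by decide : ¬(2:Fin 4) = 0), if_neg (by decide : ¬(2:Fin 4) = 1)]
  simp
lemma mstep_d (q : Fin (a+2)) : mstep a q 3 = q := by
  simp only [mstep]
  rw [if_neg (by decide : ¬(3:Fin 4) = 0), if_neg (by decide : ¬(3:Fin 4) = 1),
    if_neg (by decide : ¬(3:Fin 4) = 2)]

lemma nstep_a (q : Fin (b+2)) : nstep b q 0 = q := by
  simp only [nstep]
  rw [if_neg (by decide : ¬(0:Fin 4) = 2), if_neg (by decide : ¬(0:Fin 4) = 3)]
lemma nstep_b (q : Fin (b+2)) : nstep b q 1 = q := by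
  simp only [nstep]
  rw [if_neg (by decide : ¬(1:Fin 4) = 2), if_neg (by decide : ¬(1:Fin 4) = 3)]
lemma nstep_c (q : Fin (b+2)) : nstep b q 2 = 0 := by
  simp [nstep]
lemma nstep_d (q : Fin (b+2)) : nstep b q 3 = q + 1 := by
  simp only [nstep]
  rw [if_neg (by decide : ¬(3:Fin 4) = 2)]
  simp

lemma mstep_b_ne (q : Fin (a+2)) : mstep a q 1 ≠ fM a := by
  rw [mstep_b]
  split
  · exact pM_ne_fM a
  · assumption

lemma mstep_c_invol (q : Fin (a+2)) : mstep a (mstep a q 2) 2 = q := by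
  rcases eq_or_ne q (pM a) with rfl | h1
  · simp [mstep_c, pM_ne_fM a]
  · rcases eq_or_ne q (fM a) with rfl | h2
    · simp [mstep_c, (pM_ne_fM a).symm, pM_ne_fM a]
    · simp [mstep_c, h1, h2]

lemma evalA (k : ℕ) (S : Finset (Fin (a+2))) (T : Finset (Fin (b+2))) :
    evalP a b (S, T) (List.replicate k 0) =
      (univ.filter (fun q => q + (k : Fin (a+2)) ∈ S),
       T ∪ (if ∃ j ∈ Finset.Icc 1 k, ((j : ℕ) : Fin (a+2)) ∈ S then {0} else ∅)) := by
  induction k generalizing S T with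
  | zero =>
    simp only [List.replicate_zero, Nat.cast_zero, add_zero]
    rw [show evalP a b (S,T) [] = (S,T) from rfl]
    simp [Finset.filter_univ_mem]
  | succ k ih =>
    rw [List.replicate_succ]
    rw [show evalP a b (S,T) (0 :: List.replicate k 0) =
        evalP a b (stepP a b (S,T) 0) (List.replicate k 0) from rfl]
    have hS1 : (stepP a b (S,T) 0).1 = univ.filter (fun q => q + 1 ∈ S) := by
      simp [stepP, stepS, mstep_a]
    have hT1 : (stepP a b (S,T) 0).2 =
        T ∪ (if ((1:ℕ) : Fin (a+2)) ∈ S then ({0} : Finset (Fin (b+2))) else ∅) := by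
      simp only [stepP, stepS, mstep_a]
      congr 1
      · simp [nstep_a]
      · congr 1
        simp [Finset.mem_filter, zero_add, Nat.cast_one]
    rw [show stepP a b (S,T) 0 = ((stepP a b (S,T) 0).1, (stepP a b (S,T) 0).2) from rfl,
      hS1, hT1, ih]
    refine Prod.ext ?_ ?_
    · ext q
      simp only [Finset.mem_filter, Finset.mem_univ, true_and]
      have : q + ((k:ℕ) : Fin (a+2)) + 1 = q + (((k+1:ℕ)) : Fin (a+2)) := by
        push_cast; ring
      rw [← this]
    · show _ ∪ _ ∪ _ = _ ∪ _
      rw [Finset.union_assoc]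
      congr 1
      have hiff : ((((1:ℕ)) : Fin (a+2)) ∈ S ∨ ∃ j ∈ Finset.Icc 1 k,
          ((j : ℕ) : Fin (a+2)) ∈ univ.filter (fun q => q + 1 ∈ S)) ↔
          (∃ j ∈ Finset.Icc 1 (k+1), ((j : ℕ) : Fin (a+2)) ∈ S) := by
        constructor
        · rintro (h | ⟨j, hj, hjS⟩)
          · exact ⟨1, by simp, h⟩
          · simp only [Finset.mem_filter, Finset.mem_univ, true_and] at hjS
            refine ⟨j + 1, ?_, by push_cast; exact hjS⟩
            simp only [Finset.mem_Icc] at hj ⊢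
            omega
        · rintro ⟨j, hj, hjS⟩
          simp only [Finset.mem_Icc] at hj
          rcases eq_or_ne j 1 with rfl | hj1
          · left; exact hjS
          · right
            refine ⟨j - 1, ?_, ?_⟩
            · simp only [Finset.mem_Icc]; omega
            · simp only [Finset.mem_filter, Finset.mem_univ, true_and]
              have hj2 : ((j - 1 : ℕ) : Fin (a+2)) + 1 = ((j : ℕ) : Fin (a+2)) := by
                conv_rhs => rw [show j = (j-1)+1 by omega]
                push_cast
                ring
              rw [hj2]; exact hjS
      by_cases h : ∃ j ∈ Finset.Icc 1 (k+1), ((j : ℕ) : Fin (a+2)) ∈ S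
      · rw [if_pos h]
        rcases hiff.mpr h with h1 | h2
        · rw [if_pos h1]
          by_cases h2 : ∃ j ∈ Finset.Icc 1 k,
              ((j : ℕ) : Fin (a+2)) ∈ univ.filter (fun q => q + 1 ∈ S)
          · rw [if_pos h2]; simp
          · rw [if_neg h2]; simp
        · rw [if_pos h2, Finset.union_comm]
          by_cases h1 : (((1:ℕ)) : Fin (a+2)) ∈ S
          · rw [if_pos h1]; simp
          · rw [if_neg h1]; simp
      · rw [if_neg h]
        rw [if_neg (fun h1 => h (hiff.mp (Or.inl h1))),
            if_neg (fun h2 => h (hiff.mp (Or.inr h2)))]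
        simp

end RevCat

namespace RevCat
open Finset
open scoped Classical
variable (a b : ℕ)

lemma stepS_d (S : Finset (Fin (a+2))) : stepS a 3 S = S := by
  ext q; simp [stepS, mstep_d]

lemma evalD (k : ℕ) (S : Finset (Fin (a+2))) (T : Finset (Fin (b+2))) :
    evalP a b (S, T) (List.replicate k 3) =
      (S, T.image (fun t => t + (k : Fin (b+2))) ∪
        (if (0 : Fin (a+2)) ∈ S then (Finset.range k).image (fun j => ((j:ℕ) : Fin (b+2)))
         else ∅)) := by
  induction k generalizing T with
  | zero =>
    simp only [List.replicate_zero]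
    rw [show evalP a b (S,T) [] = (S,T) from rfl]
    simp
  | succ k ih =>
    rw [List.replicate_succ]
    rw [show evalP a b (S,T) (3 :: List.replicate k 3) =
        evalP a b (stepP a b (S,T) 3) (List.replicate k 3) from rfl]
    have h1 : stepP a b (S,T) 3 =
        (S, T.image (fun t => t + 1) ∪ (if (0 : Fin (a+2)) ∈ S then {0} else ∅)) := by
      simp only [stepP, stepS_d]
      refine Prod.ext rfl ?_
      simp [nstep_d]
    rw [h1, ih]
    refine Prod.ext rfl ?_
    show _ ∪ _ = _
    rw [Finset.image_union]
    rw [Finset.image_image]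
    have hfun : ((fun t => t + ((k:ℕ) : Fin (b+2))) ∘ (fun t => t + 1)) =
        (fun t => t + (((k+1:ℕ)) : Fin (b+2))) := by
      funext t
      show t + 1 + ((k:ℕ) : Fin (b+2)) = _
      push_cast
      ring
    rw [hfun]
    by_cases h : (0 : Fin (a+2)) ∈ S
    · rw [if_pos h, if_pos h, if_pos h]
      rw [Finset.union_assoc]
      congr 1
      ext t
      simp only [Finset.mem_union, Finset.mem_image, Finset.mem_singleton, Finset.mem_range]
      constructor
      · rintro (⟨s, rfl, rfl⟩ | ⟨j, hj, rfl⟩)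
        · exact ⟨k, by omega, by simp⟩
        · exact ⟨j, by omega, rfl⟩
      · rintro ⟨j, hj, rfl⟩
        rcases eq_or_ne j k with rfl | hjk
        · left; exact ⟨0, rfl, by simp⟩
        · right; exact ⟨j, by omega, rfl⟩
    · rw [if_neg h, if_neg h, if_neg h]
      simp

lemma evalCC (S : Finset (Fin (a+2))) (T : Finset (Fin (b+2))) :
    (evalP a b (S, T) [2, 2]).1 = S ∧ (evalP a b (S, T) [2, 2]).2 ⊆ {0} := by
  have h : evalP a b (S,T) [2,2] = stepP a b (stepP a b (S,T) 2) 2 := rfl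
  rw [h]
  constructor
  · show stepS a 2 (stepS a 2 S) = S
    ext q
    simp only [stepS, Finset.mem_filter, Finset.mem_univ, true_and]
    rw [mstep_c_invol]
  · intro t ht
    simp only [stepP, Finset.mem_union, Finset.mem_image] at ht
    rcases ht with ⟨s, _, rfl⟩ | ht
    · simp [nstep_c]
    · have key : ∀ (p : Prop) [Decidable p],
          t ∈ (if p then ({0} : Finset (Fin (b+2))) else ∅) → t ∈ ({0} : Finset (Fin (b+2))) := by
        intro p _ hp
        split at hp
        · exact hp
        · simp at hp
      exact key _ ht

lemma evalB_fM (T : Finset (Fin (b+2))) :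
    evalP a b ({fM a}, T) [1] = (∅, T) := by
  have hS : stepS a 1 ({fM a} : Finset (Fin (a+2))) = ∅ := by
    ext q
    simp only [stepS, Finset.mem_filter, Finset.mem_univ, true_and, Finset.mem_singleton,
      Finset.notMem_empty, iff_false]
    exact mstep_b_ne a q
  show stepP a b _ 1 = _
  simp only [stepP, hS]
  refine Prod.ext rfl ?_
  simp [nstep_b, Finset.image_id']

lemma evalB_univ (T : Finset (Fin (b+2))) :
    evalP a b (univ.filter (· ≠ fM a), T) [1] = (univ, T ∪ {0}) := by
  have hS : stepS a 1 (univ.filter (· ≠ fM a)) = univ := by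
    ext q
    simp only [stepS, Finset.mem_filter, Finset.mem_univ, true_and, iff_true]
    exact mstep_b_ne a q
  show stepP a b _ 1 = _
  simp only [stepP, hS]
  refine Prod.ext rfl ?_
  simp [nstep_b, Finset.image_id']

end RevCat

namespace RevCat
open Finset
open scoped Classical
variable (a b : ℕ)

def Reach (p : P a b) : Prop := ∃ w : List (Fin 4), evalP a b (initP a b) w = p

lemma reach_init : Reach a b (initP a b) := ⟨[], rfl⟩

lemma reach_step {p : P a b} (h : Reach a b p) (z : List (Fin 4)) :
    Reach a b (evalP a b p z) := by
  obtain ⟨w, hw⟩ := h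
  exact ⟨w ++ z, by rw [evalP_append, hw]⟩

noncomputable def nembed (X : Finset ℕ) : Finset (Fin (a+2)) :=
  X.image (fun v : ℕ => (v : Fin (a+2)))

lemma mem_nembed {X : Finset ℕ} (hX : ∀ v ∈ X, v < a+2) (q : Fin (a+2)) :
    q ∈ nembed a X ↔ q.val ∈ X := by
  rw [nembed, Finset.mem_image]
  constructor
  · rintro ⟨v, hv, rfl⟩
    rwa [Fin.val_cast_of_lt (hX v hv)]
  · intro h
    exact ⟨q.val, h, by simp [Fin.cast_val_eq_self]⟩

lemma zero_not_mem_nembed {X : Finset ℕ} (hX : ∀ v ∈ X, v < a+2) (h0 : 0 ∉ X) :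
    (0 : Fin (a+2)) ∉ nembed a X := by
  rw [mem_nembed a hX]
  simpa using h0

lemma stepP_T_empty (x : Fin 4) (S : Finset (Fin (a+2)))
    (h : (0 : Fin (a+2)) ∉ stepS a x S) :
    stepP a b (S, ∅) x = (stepS a x S, ∅) := by
  simp [stepP, h, Finset.image_empty]

lemma stepS_a_nat (X : Finset ℕ) (hX : ∀ v ∈ X, v < a+2) (h0 : 0 ∉ X) :
    stepS a 0 (nembed a X) = nembed a (X.image (· - 1)) := by
  have hX' : ∀ v ∈ X.image (· - 1), v < a+2 := by
    intro v hv
    simp only [Finset.mem_image] at hv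
    obtain ⟨w, hw, rfl⟩ := hv
    have := hX w hw; omega
  ext q
  simp only [stepS, Finset.mem_filter, Finset.mem_univ, true_and, mstep_a,
    mem_nembed a hX, mem_nembed a hX']
  rw [Fin.val_add_one]
  split
  · rename_i hq
    constructor
    · intro h; exact absurd h h0
    · intro h
      simp only [Finset.mem_image] at h
      obtain ⟨w, hw, hww⟩ := h
      have := hX w hw
      have hqv : q.val = a+1 := by rw [hq]; rfl
      omega
  · rename_i hq
    simp only [Finset.mem_image]
    constructor
    · intro h; exact ⟨q.val + 1, h, by omega⟩
    · rintro ⟨w, hw, hww⟩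
      have hw0 : w ≠ 0 := fun hh => h0 (hh ▸ hw)
      have : w = q.val + 1 := by omega
      rwa [← this]

lemma stepS_b_nat (X : Finset ℕ) (hX : ∀ v ∈ X, v < a+2) (ha : a ∈ X) :
    stepS a 1 (nembed a X) = nembed a (X ∪ {a+1}) := by
  have hX' : ∀ v ∈ X ∪ {a+1}, v < a+2 := by
    intro v hv
    rcases Finset.mem_union.mp hv with h | h
    · exact hX v h
    · simp only [Finset.mem_singleton] at h; omega
  ext q
  simp only [stepS, Finset.mem_filter, Finset.mem_univ, true_and, mstep_b,
    mem_nembed a hX, mem_nembed a hX', Finset.mem_union, Finset.mem_singleton]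
  split
  · rename_i hq
    have hq1 : q.val = a+1 := by rw [hq]; rfl
    have : (pM a).val = a := rfl
    rw [this]
    simp [ha, hq1]
  · rename_i hq
    have hq1 : q.val ≠ a+1 := by
      intro h
      exact hq (Fin.ext (by rw [h]; rfl))
    constructor
    · intro h; exact Or.inl h
    · rintro (h | h)
      · exact h
      · exact absurd h hq1

lemma stepS_c_nat (X : Finset ℕ) (hX : ∀ v ∈ X, v < a+2) (ha : a ∈ X) (ha1 : a+1 ∉ X) :
    stepS a 2 (nembed a X) = nembed a ((X.erase a) ∪ {a+1}) := by
  have hX' : ∀ v ∈ (X.erase a) ∪ {a+1}, v < a+2 := by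
    intro v hv
    rcases Finset.mem_union.mp hv with h | h
    · exact hX v (Finset.mem_of_mem_erase h)
    · simp only [Finset.mem_singleton] at h; omega
  ext q
  simp only [stepS, Finset.mem_filter, Finset.mem_univ, true_and, mstep_c,
    mem_nembed a hX, mem_nembed a hX', Finset.mem_union, Finset.mem_singleton,
    Finset.mem_erase]
  rcases eq_or_ne q (pM a) with rfl | h1
  · have hqv : (pM a).val = a := rfl
    have hfv : (fM a).val = a+1 := rfl
    rw [if_pos rfl, hfv, hqv]
    simp [ha1]
  · rcases eq_or_ne q (fM a) with rfl | h2
    · rw [if_neg h1, if_pos rfl]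
      have hqv : (pM a).val = a := rfl
      have hfv : (fM a).val = a+1 := rfl
      rw [hqv, hfv]
      simp [ha]
    · rw [if_neg h1, if_neg h2]
      have hq1 : q.val ≠ a := fun h => h1 (Fin.ext (by rw [h]; rfl))
      have hq2 : q.val ≠ a+1 := fun h => h2 (Fin.ext (by rw [h]; rfl))
      constructor
      · intro h; exact Or.inl ⟨hq1, h⟩
      · rintro (⟨-, h⟩ | h)
        · exact h
        · exact absurd h hq2

end RevCat

namespace RevCat
open Finset
open scoped Classical
variable (a b : ℕ)

/-- One climb step: from configuration g to configuration g+1 (word [0,2]). -/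
lemma climb_step (g : ℕ) (hg1 : 1 ≤ g) (hga : g + 1 ≤ a) (V : Finset ℕ)
    (hb : ∀ v ∈ V, 2 ≤ v ∧ v ≤ a)
    (h : Reach a b (nembed a (V ∪ {a+1-g, a+1}), ∅)) :
    Reach a b (nembed a (V.image (· - 1) ∪ {a-g, a+1}), ∅) := by
  set X := V ∪ {a+1-g, a+1} with hX
  have hXlt : ∀ v ∈ X, v < a+2 := by
    intro v hv
    simp only [hX, Finset.mem_union, Finset.mem_insert, Finset.mem_singleton] at hv
    rcases hv with h1 | h1 | h1
    · exact (hb v h1).2.trans_lt (by omega)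
    · omega
    · omega
  have hX0 : 0 ∉ X := by
    simp only [hX, Finset.mem_union, Finset.mem_insert, Finset.mem_singleton]
    push_neg
    refine ⟨fun h1 => ?_, by omega, by omega⟩
    have := (hb 0 h1).1; omega
  -- step with letter 0
  have hs1 : stepS a 0 (nembed a X) = nembed a (X.image (· - 1)) := stepS_a_nat a X hXlt hX0
  have hX1 : X.image (· - 1) = V.image (· - 1) ∪ {a-g, a} := by
    simp only [hX]
    rw [Finset.image_union]
    congr 1
    ext v
    simp only [Finset.mem_image, Finset.mem_insert, Finset.mem_singleton]
    constructor
    · rintro ⟨w, (h1 | h1), rfl⟩ <;> [left; right] <;> omega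
    · rintro (h1 | h1)
      · exact ⟨a+1-g, Or.inl rfl, by omega⟩
      · exact ⟨a+1, Or.inr rfl, by omega⟩
  have hX1lt : ∀ v ∈ X.image (· - 1), v < a+2 := by
    intro v hv
    simp only [Finset.mem_image] at hv
    obtain ⟨w, hw, rfl⟩ := hv
    have := hXlt w hw; omega
  have hX1a : a ∈ X.image (· - 1) := by
    rw [hX1]; simp
  have hX1a1 : a+1 ∉ X.image (· - 1) := by
    rw [hX1]
    simp only [Finset.mem_union, Finset.mem_image, Finset.mem_insert, Finset.mem_singleton]
    push_neg
    refine ⟨fun w hw => ?_, by omega, by omega⟩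
    have := (hb w hw).2; omega
  have hs2 : stepS a 2 (nembed a (X.image (· - 1))) =
      nembed a (((X.image (· - 1)).erase a) ∪ {a+1}) :=
    stepS_c_nat a _ hX1lt hX1a hX1a1
  have hX2 : ((X.image (· - 1)).erase a) ∪ {a+1} = V.image (· - 1) ∪ {a-g, a+1} := by
    rw [hX1]
    ext v
    simp only [Finset.mem_union, Finset.mem_erase, Finset.mem_image, Finset.mem_insert,
      Finset.mem_singleton]
    constructor
    · rintro (⟨hne, (⟨w, hw, rfl⟩ | rfl | rfl)⟩ | rfl)
      · exact Or.inl ⟨w, hw, rfl⟩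
      · exact Or.inr (Or.inl rfl)
      · omega
      · exact Or.inr (Or.inr rfl)
    · rintro (⟨w, hw, rfl⟩ | rfl | rfl)
      · have := hb w hw
        exact Or.inl ⟨by omega, Or.inl ⟨w, hw, rfl⟩⟩
      · exact Or.inl ⟨by omega, Or.inr (Or.inl rfl)⟩
      · exact Or.inr rfl
  -- goal set has no zero
  have hgoal0 : (0:Fin (a+2)) ∉ stepS a 0 (nembed a X) := by
    rw [hs1]
    apply zero_not_mem_nembed a hX1lt
    rw [hX1]
    simp only [Finset.mem_union, Finset.mem_image, Finset.mem_insert, Finset.mem_singleton]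
    push_neg
    refine ⟨fun w hw => ?_, by omega, by omega⟩
    have := (hb w hw).1; omega
  have hgoal0' : (0:Fin (a+2)) ∉ stepS a 2 (nembed a (X.image (· - 1))) := by
    rw [hs2, hX2]
    apply zero_not_mem_nembed a
    · intro v hv
      simp only [Finset.mem_union, Finset.mem_image, Finset.mem_insert,
        Finset.mem_singleton] at hv
      rcases hv with ⟨w, hw, rfl⟩ | rfl | rfl
      · have := hXlt w (by simp [hX, hw]); omega
      · omega
      · omega
    · simp only [Finset.mem_union, Finset.mem_image, Finset.mem_insert, Finset.mem_singleton]
      push_neg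
      refine ⟨fun w hw => ?_, by omega, by omega⟩
      have := (hb w hw).1; omega
  have h2 := reach_step a b h [0, 2]
  have heval : evalP a b (nembed a X, ∅) [0, 2] =
      (nembed a (V.image (· - 1) ∪ {a-g, a+1}), ∅) := by
    have e1 : evalP a b (nembed a X, ∅) [0, 2] =
        stepP a b (stepP a b (nembed a X, ∅) 0) 2 := rfl
    rw [e1, stepP_T_empty a b 0 _ hgoal0, hs1,
      stepP_T_empty a b 2 _ hgoal0', hs2, hX2]
  rwa [heval] at h2

end RevCat

namespace RevCat
open Finset
open scoped Classical
variable (a b : ℕ)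

lemma addtop (G : ℕ) (hG1 : 1 ≤ G) (hGa : G ≤ a) (V : Finset ℕ)
    (hb : ∀ v ∈ V, G+1 ≤ v ∧ v ≤ a)
    (h : Reach a b (nembed a (V ∪ {a+1}), ∅)) :
    Reach a b (nembed a (V.image (· - G) ∪ {a+1-G, a+1}), ∅) := by
  have ha1 : 1 ≤ a := hG1.trans hGa
  -- base configuration g = 1, via word [0, 1]
  have base : Reach a b (nembed a (V.image (· - 1) ∪ {a+1-1, a+1}), ∅) := by
    set X := V ∪ {a+1} with hX
    have hXlt : ∀ v ∈ X, v < a+2 := by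
      intro v hv
      rcases Finset.mem_union.mp hv with h1 | h1
      · have := (hb v h1).2; omega
      · simp only [Finset.mem_singleton] at h1; omega
    have hX0 : 0 ∉ X := by
      simp only [hX, Finset.mem_union, Finset.mem_singleton]
      push_neg
      refine ⟨fun h1 => ?_, by omega⟩
      have := (hb 0 h1).1; omega
    have hX1 : X.image (· - 1) = V.image (· - 1) ∪ {a} := by
      simp only [hX]
      rw [Finset.image_union, Finset.image_singleton, show a+1-1 = a from rfl]
    have hX1lt : ∀ v ∈ X.image (· - 1), v < a+2 := by
      intro v hv
      simp only [Finset.mem_image] at hv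
      obtain ⟨w, hw, rfl⟩ := hv
      have := hXlt w hw; omega
    have hX10 : 0 ∉ X.image (· - 1) := by
      rw [hX1]
      simp only [Finset.mem_union, Finset.mem_image, Finset.mem_singleton]
      push_neg
      refine ⟨fun w hw => ?_, by omega⟩
      have := (hb w hw).1; omega
    have hX1a : a ∈ X.image (· - 1) := by rw [hX1]; simp
    have h0' : (0:Fin (a+2)) ∉ stepS a 0 (nembed a X) := by
      rw [stepS_a_nat a X hXlt hX0]
      exact zero_not_mem_nembed a hX1lt hX10
    have hX2lt : ∀ v ∈ X.image (· - 1) ∪ {a+1}, v < a+2 := by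
      intro v hv
      rcases Finset.mem_union.mp hv with h1 | h1
      · exact hX1lt v h1
      · simp only [Finset.mem_singleton] at h1; omega
    have h0'' : (0:Fin (a+2)) ∉ stepS a 1 (nembed a (X.image (· - 1))) := by
      rw [stepS_b_nat a _ hX1lt hX1a]
      apply zero_not_mem_nembed a hX2lt
      simp only [Finset.mem_union, Finset.mem_singleton]
      push_neg
      exact ⟨hX10, by omega⟩
    have heval : evalP a b (nembed a X, ∅) [0, 1] =
        (nembed a (V.image (· - 1) ∪ {a+1-1, a+1}), ∅) := by
      have e1 : evalP a b (nembed a X, ∅) [0, 1] =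
          stepP a b (stepP a b (nembed a X, ∅) 0) 1 := rfl
      rw [e1, stepP_T_empty a b 0 _ h0', stepS_a_nat a X hXlt hX0,
        stepP_T_empty a b 1 _ h0'', stepS_b_nat a _ hX1lt hX1a, hX1]
      rw [show a+1-1 = a from rfl]
      congr 2
      rw [Finset.union_assoc]
      congr 1
    have := reach_step a b h [0, 1]
    rwa [heval] at this
  suffices H : ∀ g, 1 ≤ g → g ≤ G →
      Reach a b (nembed a (V.image (· - g) ∪ {a+1-g, a+1}), ∅) from H G hG1 le_rfl
  intro g hg1
  induction g, hg1 using Nat.le_induction with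
  | base => intro _; exact base
  | succ g hg ih =>
    intro hgG
    have hreach := ih (by omega)
    have hstep := climb_step a b g hg (by omega) (V.image (· - g))
      (by
        intro v hv
        simp only [Finset.mem_image] at hv
        obtain ⟨w, hw, rfl⟩ := hv
        have := hb w hw
        constructor <;> omega)
      hreach
    have himg : (V.image (· - g)).image (· - 1) = V.image (· - (g+1)) := by
      rw [Finset.image_image]
      apply Finset.image_congr
      intro v _
      simp only [Function.comp]
      omega
    rw [himg] at hstep
    have : a - g = a + 1 - (g+1) := by omega
    rwa [this] at hstep

end RevCat

namespace RevCat
open Finset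
open scoped Classical
variable (a b : ℕ)

lemma nembed_singleton_top : nembed a {a+1} = {fM a} := by
  rw [nembed, Finset.image_singleton]
  congr 1
  exact Fin.ext (by rw [Fin.val_cast_of_lt (by omega)]; rfl)

lemma reach_nat (k : ℕ) : ∀ X : Finset ℕ, X.card = k → (∀ v ∈ X, 1 ≤ v ∧ v ≤ a) →
    Reach a b (nembed a (X ∪ {a+1}), ∅) := by
  induction k with
  | zero =>
    intro X hcard _
    rw [Finset.card_eq_zero.mp hcard]
    rw [Finset.empty_union, nembed_singleton_top]
    exact reach_init a b
  | succ k ih =>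
    intro X hcard hX
    have hne : X.Nonempty := Finset.card_pos.mp (by omega)
    set t := X.max' hne with ht
    have htX : t ∈ X := X.max'_mem hne
    have ht1 : 1 ≤ t := (hX t htX).1
    have hta : t ≤ a := (hX t htX).2
    set g := a + 1 - t with hg
    have hg1 : 1 ≤ g := by omega
    have hga : g ≤ a := by omega
    set V := (X.erase t).image (· + g) with hV
    have hVcard : V.card = k := by
      rw [hV, Finset.card_image_of_injective _ (add_left_injective g),
        Finset.card_erase_of_mem htX, hcard]
      omega
    have hVb : ∀ v ∈ V, 1 ≤ v ∧ v ≤ a := by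
      intro v hv
      simp only [hV, Finset.mem_image, Finset.mem_erase] at hv
      obtain ⟨w, ⟨hwt, hwX⟩, rfl⟩ := hv
      have h1 := hX w hwX
      have h2 : w ≤ t := X.le_max' w hwX
      omega
    have hVb2 : ∀ v ∈ V, g + 1 ≤ v ∧ v ≤ a := by
      intro v hv
      simp only [hV, Finset.mem_image, Finset.mem_erase] at hv
      obtain ⟨w, ⟨hwt, hwX⟩, rfl⟩ := hv
      have h1 := hX w hwX
      have h2 : w ≤ t := X.le_max' w hwX
      omega
    have hr := addtop a b g hg1 hga V hVb2 (ih V hVcard hVb)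
    have himg : V.image (· - g) = X.erase t := by
      rw [hV, Finset.image_image]
      have : ((· - g) ∘ (· + g)) = (id : ℕ → ℕ) := by
        funext v; simp [Function.comp]
      rw [this, Finset.image_id]
    have htop : a + 1 - g = t := by omega
    rw [himg, htop] at hr
    have hfin : X.erase t ∪ {t, a+1} = X ∪ {a+1} := by
      ext v
      simp only [Finset.mem_union, Finset.mem_erase, Finset.mem_insert, Finset.mem_singleton]
      constructor
      · rintro (⟨hne', hv⟩ | rfl | rfl)
        · exact Or.inl hv
        · exact Or.inl htX
        · exact Or.inr rfl
      · rintro (hv | rfl)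
        · rcases eq_or_ne v t with rfl | hvt
          · exact Or.inr (Or.inl rfl)
          · exact Or.inl ⟨hvt, hv⟩
        · exact Or.inr (Or.inr rfl)
    rwa [hfin] at hr

/-- Reachability of (S, ∅) for S not containing 0. -/
lemma reach_S_empty (S : Finset (Fin (a+2))) (h0 : (0 : Fin (a+2)) ∉ S) :
    Reach a b (S, ∅) := by
  rcases eq_or_ne S ∅ with rfl | hne
  · have := reach_step a b (reach_init a b) [1]
    rwa [show evalP a b (initP a b) [1] = evalP a b ({fM a}, ∅) [1] from rfl,
      evalB_fM a b ∅] at this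
  · obtain ⟨q0, hq0⟩ := Finset.nonempty_iff_ne_empty.mpr hne
    set t := S.max' ⟨q0, hq0⟩ with ht
    have htS : t ∈ S := S.max'_mem _
    set δ := a + 1 - t.val with hδ
    have hvals : ∀ s ∈ S, 1 ≤ s.val ∧ s.val ≤ t.val := by
      intro s hs
      constructor
      · rcases Nat.eq_zero_or_pos s.val with h | h
        · exact absurd (show s = 0 from Fin.ext h) (fun hh => h0 (hh ▸ hs))
        · exact h
      · exact S.le_max' s hs
    set Y := S.image (fun s : Fin (a+2) => s.val + δ) with hY
    have hYlt : ∀ v ∈ Y, v < a + 2 := by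
      intro v hv
      simp only [hY, Finset.mem_image] at hv
      obtain ⟨s, hs, rfl⟩ := hv
      have h1 := (hvals s hs).2
      have h2 : t.val ≤ a + 1 := by omega
      omega
    have htopY : a + 1 ∈ Y := by
      simp only [hY, Finset.mem_image]
      exact ⟨t, htS, by omega⟩
    have hYer : ∀ v ∈ Y.erase (a+1), 1 ≤ v ∧ v ≤ a := by
      intro v hv
      obtain ⟨hvne, hv⟩ := Finset.mem_erase.mp hv
      simp only [hY, Finset.mem_image] at hv
      obtain ⟨s, hs, rfl⟩ := hv
      have h1 := hvals s hs
      have h2 : t.val ≤ a + 1 := by omega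
      omega
    have hr := reach_nat a b (Y.erase (a+1)).card (Y.erase (a+1)) rfl hYer
    have hYeq : Y.erase (a+1) ∪ {a+1} = Y := by
      ext v
      simp only [Finset.mem_union, Finset.mem_erase, Finset.mem_singleton]
      constructor
      · rintro (⟨-, hv⟩ | rfl)
        · exact hv
        · exact htopY
      · intro hv
        rcases eq_or_ne v (a+1) with rfl | hne'
        · exact Or.inr rfl
        · exact Or.inl ⟨hne', hv⟩
    rw [hYeq] at hr
    -- now rotate down by δ
    have hrot := reach_step a b hr (List.replicate δ 0)
    rw [evalA] at hrot
    have hnem : nembed a Y = S.image (fun s => s + (δ : Fin (a+2))) := by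
      rw [hY, nembed, Finset.image_image]
      apply Finset.image_congr
      intro s _
      simp only [Function.comp]
      push_cast
      rfl
    have hS : (univ.filter (fun q => q + (δ : Fin (a+2)) ∈ nembed a Y)) = S := by
      rw [hnem]
      ext q
      simp only [Finset.mem_filter, Finset.mem_univ, true_and, Finset.mem_image]
      constructor
      · rintro ⟨s, hs, hsq⟩
        rwa [← add_left_injective _ hsq]
      · intro hq
        exact ⟨q, hq, rfl⟩
    have hcond : ¬ ∃ j ∈ Finset.Icc 1 δ, ((j:ℕ) : Fin (a+2)) ∈ nembed a Y := by
      rintro ⟨j, hj, hjY⟩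
      simp only [Finset.mem_Icc] at hj
      rw [mem_nembed a hYlt] at hjY
      simp only [hY, Finset.mem_image] at hjY
      obtain ⟨s, hs, hsj⟩ := hjY
      have h1 := (hvals s hs).1
      have hjlt : j < a + 2 := by omega
      rw [Fin.val_cast_of_lt hjlt] at hsj
      omega
    rw [if_neg hcond] at hrot
    simpa [hS] using hrot

end RevCat

namespace RevCat
open Finset
open scoped Classical
variable (a b : ℕ)

/-- Full rotation: S unchanged, 0 added to T (for nonempty S avoiding 0). -/
lemma full_rotation (S : Finset (Fin (a+2))) (h0 : (0:Fin (a+2)) ∉ S) (hne : S.Nonempty)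
    (T : Finset (Fin (b+2))) (h : Reach a b (S, T)) : Reach a b (S, T ∪ {0}) := by
  have hrot := reach_step a b h (List.replicate (a+2) 0)
  rw [evalA] at hrot
  have hc : ((a+2 : ℕ) : Fin (a+2)) = 0 := Fin.natCast_self _
  have hfil : (univ.filter (fun q => q + ((a+2:ℕ) : Fin (a+2)) ∈ S)) = S := by
    rw [hc]
    simp [Finset.filter_univ_mem]
  have hcond : ∃ j ∈ Finset.Icc 1 (a+2), ((j:ℕ) : Fin (a+2)) ∈ S := by
    obtain ⟨s, hs⟩ := hne
    refine ⟨s.val, ?_, by rwa [Fin.cast_val_eq_self]⟩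
    simp only [Finset.mem_Icc]
    have : s ≠ 0 := fun hh => h0 (hh ▸ hs)
    have : s.val ≠ 0 := fun hh => this (Fin.ext hh)
    omega
  rw [hfil, if_pos hcond] at hrot
  exact hrot

lemma reach_ST (l : ℕ) : ∀ T : Finset (Fin (b+2)), (∀ t ∈ T, t.val ≤ l) →
    ∀ S : Finset (Fin (a+2)), (0 : Fin (a+2)) ∉ S → S.Nonempty → Reach a b (S, T) := by
  induction l with
  | zero =>
    intro T hT S h0 hne
    have hsub : T ⊆ {0} := by
      intro t ht
      have := hT t ht
      simp only [Finset.mem_singleton]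
      have h1 : t.val = 0 := by omega
      exact Fin.ext (by simpa using h1)
    rcases Finset.subset_singleton_iff.mp hsub with rfl | rfl
    · exact reach_S_empty a b S h0
    · have := full_rotation a b S h0 hne ∅ (reach_S_empty a b S h0)
      rwa [Finset.empty_union] at this
  | succ l ih =>
    intro T hT S h0 hne
    by_cases hall : ∀ t ∈ T, t.val ≤ l
    · exact ih T hall S h0 hne
    · set T₀ := (T.erase 0).image (· - (1 : Fin (b+2))) with hT₀
      have hT₀b : ∀ t ∈ T₀, t.val ≤ l := by
        intro t ht
        simp only [hT₀, Finset.mem_image, Finset.mem_erase] at ht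
        obtain ⟨s, ⟨hs0, hsT⟩, rfl⟩ := ht
        rw [Fin.coe_sub_one, if_neg hs0]
        have := hT s hsT
        have : s.val ≠ 0 := fun hh => hs0 (Fin.ext hh)
        omega
      have hr := ih T₀ hT₀b S h0 hne
      have hd := reach_step a b hr (List.replicate 1 3)
      rw [evalD, if_neg h0] at hd
      have himg : T₀.image (fun t => t + ((1:ℕ) : Fin (b+2))) = T.erase 0 := by
        rw [hT₀, Finset.image_image]
        have : ((fun t => t + ((1:ℕ) : Fin (b+2))) ∘ (· - (1 : Fin (b+2)))) = id := by
          funext t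
          simp only [Function.comp, Nat.cast_one, id]
          ring
        rw [this, Finset.image_id]
      rw [himg, Finset.union_empty] at hd
      by_cases h0T : (0 : Fin (b+2)) ∈ T
      · have := full_rotation a b S h0 hne _ hd
        rwa [show T.erase 0 ∪ {0} = T by
          rw [Finset.union_comm, ← Finset.insert_eq, Finset.insert_erase h0T]] at this
      · rwa [Finset.erase_eq_of_notMem h0T] at hd

lemma reach_mem_not_univ (S : Finset (Fin (a+2))) (h0 : (0:Fin (a+2)) ∈ S)
    (hne : S ≠ univ) (T : Finset (Fin (b+2))) (h0T : (0 : Fin (b+2)) ∈ T) :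
    Reach a b (S, T) := by
  have hv : ∃ v, v ∉ S := by
    by_contra hc
    push_neg at hc
    exact hne (Finset.eq_univ_iff_forall.mpr hc)
  obtain ⟨v, hvS⟩ := hv
  have hv0 : v ≠ 0 := fun hh => hvS (hh ▸ h0)
  have hv0' : v.val ≠ 0 := fun hh => hv0 (Fin.ext hh)
  have hvlt : v.val < a + 2 := v.isLt
  set k := a + 2 - v.val with hk
  have hkb : 1 ≤ k ∧ k < a + 2 := by omega
  set S' := S.image (fun s => s + ((k:ℕ) : Fin (a+2))) with hS'
  have hvk : v + ((k:ℕ) : Fin (a+2)) = 0 := by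
    apply Fin.ext
    have h1 : (v + ((k:ℕ) : Fin (a+2))).val = (v.val + ((k:ℕ) : Fin (a+2)).val) % (a+2) :=
      Fin.val_add _ _
    rw [h1, Fin.val_cast_of_lt hkb.2]
    have hz : (0 : Fin (a+2)).val = 0 := rfl
    have hsum : v.val + k = a + 2 := by omega
    rw [hz, hsum, Nat.mod_self]
  have h0S' : (0 : Fin (a+2)) ∉ S' := by
    simp only [hS', Finset.mem_image]
    rintro ⟨s, hs, hsk⟩
    have heq : s + ((k:ℕ) : Fin (a+2)) = v + ((k:ℕ) : Fin (a+2)) := by rw [hsk, hvk]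
    have : s = v := add_left_injective _ heq
    exact hvS (this ▸ hs)
  have hne' : S'.Nonempty := ⟨0 + ((k:ℕ) : Fin (a+2)), Finset.mem_image.mpr ⟨0, h0, rfl⟩⟩
  have hr := reach_ST a b (b+1) T (fun t _ => by omega) S' h0S' hne'
  have hrot := reach_step a b hr (List.replicate k 0)
  rw [evalA] at hrot
  have hfil : (univ.filter (fun q => q + ((k:ℕ) : Fin (a+2)) ∈ S')) = S := by
    ext q
    simp only [hS', Finset.mem_filter, Finset.mem_univ, true_and, Finset.mem_image]
    constructor
    · rintro ⟨s, hs, hsq⟩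
      obtain rfl : s = q := add_left_injective _ hsq
      exact hs
    · intro hq
      exact ⟨q, hq, rfl⟩
  have hcond : ∃ j ∈ Finset.Icc 1 k, ((j:ℕ) : Fin (a+2)) ∈ S' := by
    refine ⟨k, by simp [hkb.1], ?_⟩
    simp only [hS', Finset.mem_image]
    exact ⟨0, h0, by rw [zero_add]⟩
  rw [hfil, if_pos hcond] at hrot
  rwa [Finset.union_eq_left.mpr (Finset.singleton_subset_iff.mpr h0T)] at hrot

lemma reach_all (S : Finset (Fin (a+2))) (T : Finset (Fin (b+2)))
    (hv : (0 : Fin (a+2)) ∈ S → (0 : Fin (b+2)) ∈ T) : Reach a b (S, T) := by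
  by_cases h0 : (0 : Fin (a+2)) ∈ S
  · have h0T := hv h0
    by_cases hu : S = univ
    · subst hu
      have h0' : (0 : Fin (a+2)) ∈ univ.filter (· ≠ fM a) := by
        simp [zero_ne_fM a]
      have hne' : (univ.filter (· ≠ fM a) : Finset (Fin (a+2))) ≠ univ := by
        intro hh
        have : fM a ∈ univ.filter (· ≠ fM a) := by rw [hh]; exact Finset.mem_univ _
        simp at this
      have hr := reach_mem_not_univ a b _ h0' hne' T h0T
      have := reach_step a b hr [1]
      rw [evalB_univ] at this
      rwa [Finset.union_eq_left.mpr (Finset.singleton_subset_iff.mpr h0T)] at this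
    · exact reach_mem_not_univ a b S h0 hu T h0T
  · rcases eq_or_ne S ∅ with rfl | hne
    · have hr := reach_ST a b (b+1) T (fun t _ => by omega) {fM a}
        (by simp [(zero_ne_fM a)]) ⟨fM a, Finset.mem_singleton_self _⟩
      have := reach_step a b hr [1]
      rwa [evalB_fM] at this
    · exact reach_ST a b (b+1) T (fun t _ => by omega) S h0
        (Finset.nonempty_iff_ne_empty.mpr hne)

end RevCat

namespace RevCat
open Finset
open scoped Classical
variable (a b : ℕ)

lemma fN_val : (fN b).val = b + 1 := rfl

lemma dtest (S : Finset (Fin (a+2))) (T : Finset (Fin (b+2))) (t : Fin (b+2)) :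
    (fN b ∈ (evalP a b (S,T) (List.replicate (b+1-t.val) 3)).2) ↔ t ∈ T := by
  rw [evalD]
  set k := b + 1 - t.val with hk
  have htval : t.val < b + 2 := t.isLt
  simp only [Finset.mem_union, Finset.mem_image]
  constructor
  · rintro (⟨s, hs, hsf⟩ | hite)
    · have hval : (s.val + k) % (b+2) = b + 1 := by
        have h1 := Fin.val_add s ((k:ℕ) : Fin (b+2))
        rw [Fin.val_cast_of_lt (by omega : k < b+2)] at h1
        rw [← h1, hsf, fN_val]
      have hs2 : s.val < b + 2 := s.isLt
      have hseq : s.val = t.val := by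
        rcases Nat.lt_or_ge (s.val + k) (b+2) with h | h
        · rw [Nat.mod_eq_of_lt h] at hval; omega
        · rw [Nat.mod_eq_sub_mod h, Nat.mod_eq_of_lt (by omega)] at hval
          omega
      rwa [show s = t from Fin.ext hseq] at hs
    · exfalso
      split at hite
      · simp only [Finset.mem_image, Finset.mem_range] at hite
        obtain ⟨j, hj, hjf⟩ := hite
        have hval := congrArg Fin.val hjf
        rw [Fin.val_cast_of_lt (by omega : j < b+2), fN_val] at hval
        omega
      · simp at hite
  · intro ht
    left
    refine ⟨t, ht, ?_⟩
    apply Fin.ext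
    have h1 := Fin.val_add t ((k:ℕ) : Fin (b+2))
    rw [Fin.val_cast_of_lt (by omega : k < b+2)] at h1
    rw [h1, fN_val, Nat.mod_eq_of_lt (by omega)]
    omega

lemma atest (S : Finset (Fin (a+2))) (T : Finset (Fin (b+2))) (s : Fin (a+2)) :
    (fN b ∈ (evalP a b (S,T)
      (List.replicate s.val 0 ++ ([2,2] ++ List.replicate (b+2) 3))).2) ↔ s ∈ S := by
  rw [evalP_append, evalP_append, evalA]
  set S₁ := univ.filter (fun q => q + ((s.val : ℕ) : Fin (a+2)) ∈ S) with hS₁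
  have h0S₁ : (0 : Fin (a+2)) ∈ S₁ ↔ s ∈ S := by
    simp only [hS₁, Finset.mem_filter, Finset.mem_univ, true_and, zero_add,
      Fin.cast_val_eq_self]
  set T₁ := (T ∪ if ∃ j ∈ Finset.Icc 1 s.val, ((j:ℕ) : Fin (a+2)) ∈ S then ({0} : Finset (Fin (b+2))) else ∅) with hT₁
  obtain ⟨hcc1, hcc2⟩ := evalCC a b S₁ T₁
  have hpair : evalP a b (S₁, T₁) [2,2] = (S₁, (evalP a b (S₁, T₁) [2,2]).2) :=
    Prod.ext hcc1 rfl
  rw [hpair, evalD]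
  have hcast : ((b+2 : ℕ) : Fin (b+2)) = 0 := Fin.natCast_self _
  rw [hcast]
  simp only [add_zero, Finset.image_id']
  by_cases hs : s ∈ S
  · rw [if_pos (h0S₁.mpr hs)]
    simp only [iff_true, hs, Finset.mem_union]
    right
    simp only [Finset.mem_image, Finset.mem_range]
    exact ⟨b+1, by omega, Fin.ext (by rw [Fin.val_cast_of_lt (by omega), fN_val])⟩
  · rw [if_neg (fun hh => hs (h0S₁.mp hh))]
    simp only [iff_false, hs, Finset.union_empty]
    intro hmem
    have := hcc2 hmem
    simp only [Finset.mem_singleton] at this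
    have := congrArg Fin.val this
    rw [fN_val] at this
    simp at this

lemma distinguish (p q : P a b) (hpq : p ≠ q) :
    ∃ z, ¬ ((fN b ∈ (evalP a b p z).2) ↔ (fN b ∈ (evalP a b q z).2)) := by
  obtain ⟨S, T⟩ := p
  obtain ⟨S', T'⟩ := q
  by_cases hT : T = T'
  · subst hT
    have hS : S ≠ S' := fun h => hpq (by rw [h])
    have : ∃ s : Fin (a+2), ¬ ((s ∈ S) ↔ (s ∈ S')) := by
      by_contra hc
      push_neg at hc
      exact hS (Finset.ext fun s => hc s)
    obtain ⟨s, hs⟩ := this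
    refine ⟨List.replicate s.val 0 ++ ([2,2] ++ List.replicate (b+2) 3), ?_⟩
    rw [atest, atest]
    exact hs
  · have : ∃ t : Fin (b+2), ¬ ((t ∈ T) ↔ (t ∈ T')) := by
      by_contra hc
      push_neg at hc
      exact hT (Finset.ext fun t => hc t)
    obtain ⟨t, ht⟩ := this
    refine ⟨List.replicate (b+1-t.val) 3, ?_⟩
    rw [dtest, dtest]
    exact ht

end RevCat

namespace RevCat
open Finset
open scoped Classical
variable (a b : ℕ)

lemma card_mem_filter (c : ℕ) :
    (univ.filter (fun S : Finset (Fin (c+2)) => (0:Fin (c+2)) ∈ S)).card = 2^(c+1) ∧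
    (univ.filter (fun S : Finset (Fin (c+2)) => (0:Fin (c+2)) ∉ S)).card = 2^(c+1) := by
  have hbij : (univ.filter (fun S : Finset (Fin (c+2)) => (0:Fin (c+2)) ∈ S)).card =
      (univ.filter (fun S : Finset (Fin (c+2)) => (0:Fin (c+2)) ∉ S)).card := by
    refine Finset.card_bij' (fun S _ => S.erase 0) (fun T _ => insert 0 T) ?_ ?_ ?_ ?_
    · intro S hS
      simp only [Finset.mem_filter, Finset.mem_univ, true_and]
      exact Finset.notMem_erase _ _
    · intro T hT
      simp only [Finset.mem_filter, Finset.mem_univ, true_and]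
      exact Finset.mem_insert_self _ _
    · intro S hS
      exact Finset.insert_erase (by simpa using hS)
    · intro T hT
      exact Finset.erase_insert (by simpa using hT)
  have hsum : (univ.filter (fun S : Finset (Fin (c+2)) => (0:Fin (c+2)) ∈ S)).card +
      (univ.filter (fun S : Finset (Fin (c+2)) => ¬ (0:Fin (c+2)) ∈ S)).card =
      2^(c+2) := by
    rw [Finset.card_filter_add_card_filter_not]
    rw [Finset.card_univ, Fintype.card_finset, Fintype.card_fin]
  have hpow : (2:ℕ)^(c+2) = 2^(c+1) * 2 := pow_succ 2 (c+1)
  constructor <;> omega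

def ValidSet : Finset (P a b) :=
  univ.filter (fun p => (0:Fin (a+2)) ∈ p.1 → (0:Fin (b+2)) ∈ p.2)

lemma card_valid : (ValidSet a b).card = 3 * 2^(a+b+2) := by
  have hsum : (ValidSet a b).card +
      (univ.filter (fun p : P a b => ¬ ((0:Fin (a+2)) ∈ p.1 → (0:Fin (b+2)) ∈ p.2))).card =
      Fintype.card (P a b) := by
    rw [ValidSet, Finset.card_filter_add_card_filter_not, Finset.card_univ]
  have hbadeq : (univ.filter (fun p : P a b =>
      ¬ ((0:Fin (a+2)) ∈ p.1 → (0:Fin (b+2)) ∈ p.2))) =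
      ((univ.filter (fun S : Finset (Fin (a+2)) => (0:Fin (a+2)) ∈ S)) ×ˢ
       (univ.filter (fun T : Finset (Fin (b+2)) => (0:Fin (b+2)) ∉ T))) := by
    ext ⟨S, T⟩
    simp only [Finset.mem_filter, Finset.mem_univ, true_and, Finset.mem_product]
    tauto
  have hbad : (univ.filter (fun p : P a b =>
      ¬ ((0:Fin (a+2)) ∈ p.1 → (0:Fin (b+2)) ∈ p.2))).card = 2^(a+1) * 2^(b+1) := by
    rw [hbadeq, Finset.card_product, (card_mem_filter a).1, (card_mem_filter b).2]
  have hP : Fintype.card (P a b) = 2^(a+2) * 2^(b+2) := by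
    rw [Fintype.card_prod, Fintype.card_finset, Fintype.card_finset, Fintype.card_fin,
      Fintype.card_fin]
  have e1 : (2:ℕ)^(a+2) = 2 * 2^(a+1) := by ring
  have e2 : (2:ℕ)^(b+2) = 2 * 2^(b+1) := by ring
  have e3 : (2:ℕ)^(a+b+2) = 2^(a+1) * 2^(b+1) := by
    rw [← pow_add]; ring_nf
  rw [hbad, hP, e1, e2] at hsum
  have h4 : (2 * (2:ℕ)^(a+1)) * (2 * 2^(b+1)) = 4 * (2^(a+1) * 2^(b+1)) := by ring
  rw [h4] at hsum
  rw [e3]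
  generalize (2:ℕ)^(a+1) * 2^(b+1) = Z at hsum ⊢
  omega

end RevCat

/-- Reversal combined with catenation: the bound (3/4)·2^(m+n) is reachable for m, n ≥ 2,
    with witnesses over a four-letter alphabet. -/
theorem revcat_lower_bound (m n : ℕ) (hm : 2 ≤ m) (hn : 2 ≤ n) :
    ∃ (M : DFA (Fin 4) (Fin m)) (N : DFA (Fin 4) (Fin n)),
      ∀ (σ : Type) (inst : Fintype σ) (C : DFA (Fin 4) σ),
        C.accepts = revLang M.accepts * N.accepts →
        3 * 2 ^ (m + n - 2) ≤ @Fintype.card σ inst := by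
  obtain ⟨a, rfl⟩ : ∃ a, m = a + 2 := ⟨m - 2, by omega⟩
  obtain ⟨b, rfl⟩ : ∃ b, n = b + 2 := ⟨n - 2, by omega⟩
  refine ⟨RevCat.M a, RevCat.N b, ?_⟩
  intro σ inst C hC
  -- choose a witness word for every reachable state
  have hword : ∀ p ∈ RevCat.ValidSet a b, ∃ w : List (Fin 4),
      RevCat.evalP a b (RevCat.initP a b) w = p := by
    intro p hp
    simp only [RevCat.ValidSet, Finset.mem_filter, Finset.mem_univ, true_and] at hp
    have := RevCat.reach_all a b p.1 p.2 hp
    exact this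
  classical
  set w : RevCat.P a b → List (Fin 4) :=
    fun p => if h : RevCat.Reach a b p then h.choose else [] with hwdef
  have hw : ∀ p, RevCat.Reach a b p → RevCat.evalP a b (RevCat.initP a b) (w p) = p := by
    intro p h
    simp only [hwdef, dif_pos h]
    exact h.choose_spec
  -- acceptance characterization
  have hacc : ∀ u : List (Fin 4),
      (C.eval u ∈ C.accept) ↔ RevCat.fN b ∈ RevCat.Tpart a b u := by
    intro u
    have h1 : u ∈ C.accepts ↔ u ∈ revLang (RevCat.M a).accepts * (RevCat.N b).accepts := by
      rw [hC]
    exact (DFA.mem_accepts C).symm.trans (h1.trans (RevCat.accept_iff a b u))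
  have heval2 : ∀ p : RevCat.P a b, RevCat.Reach a b p → ∀ z,
      (RevCat.fN b ∈ (RevCat.evalP a b p z).2 ↔ C.evalFrom (C.evalFrom C.start (w p)) z ∈ C.accept) := by
    intro p hp z
    have h1 : RevCat.evalP a b p z = RevCat.evalP a b (RevCat.initP a b) (w p ++ z) := by
      rw [RevCat.evalP_append, hw p hp]
    have h2 : RevCat.evalP a b (RevCat.initP a b) (w p ++ z) =
        (RevCat.Spart a (w p ++ z), RevCat.Tpart a b (w p ++ z)) := RevCat.evalP_spec a b _
    rw [h1, h2]
    have h3 : C.eval (w p ++ z) = C.evalFrom (C.evalFrom C.start (w p)) z := by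
      simp [DFA.eval, DFA.evalFrom, List.foldl_append]
    rw [← h3]
    exact (hacc _).symm
  -- injectivity
  have hinj : Set.InjOn (fun p => C.evalFrom C.start (w p)) (RevCat.ValidSet a b : Set (RevCat.P a b)) := by
    intro p hp q hq heq
    by_contra hne
    obtain ⟨z, hz⟩ := RevCat.distinguish a b p q hne
    apply hz
    have hrp : RevCat.Reach a b p := by
      apply RevCat.reach_all a b p.1 p.2
      simpa [RevCat.ValidSet] using hp
    have hrq : RevCat.Reach a b q := by
      apply RevCat.reach_all a b q.1 q.2
      simpa [RevCat.ValidSet] using hq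
    rw [heval2 p hrp z, heval2 q hrq z]
    simp only at heq
    rw [heq]
  have hcard : (RevCat.ValidSet a b).card ≤ @Fintype.card σ inst := by
    rw [← @Finset.card_univ σ inst]
    apply Finset.card_le_card_of_injOn (fun p => C.evalFrom C.start (w p))
    · intro p _
      exact @Finset.mem_univ σ inst _
    · exact hinj
  rw [RevCat.card_valid a b] at hcard
  have harith : (a + 2) + (b + 2) - 2 = a + b + 2 := by omega
  rw [harith]
  exact hcard
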